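/- arXiv:1405.5958 — 2 statements merged into one kernel-verified Lean document; each statement's English description precedes it below -/
import Mathlib

section
/- Let R and S be commutative rings, each a normal domain (integrally closed in its fraction field). Then the product ring R × S is integrally closed in its total quotient ring. -/
open nonZeroDivisors Polynomial

lemma aux_mem_nzd_prod {R S : Type*} [CommRing R] [CommRing S] (p : R × S) :
    p ∈ (R × S)⁰ ↔ p.1 ∈ R⁰ ∧ p.2 ∈ S⁰ := by
  simp only [mem_nonZeroDivisors_iff_right]
  constructor
  · intro h
    constructor
    · intro a ha
      have := h (a, 0) (by ext <;> simp [ha])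
      simpa using congrArg Prod.fst this
    · intro b hb
      have := h (0, b) (by ext <;> simp [hb])
      simpa using congrArg Prod.snd this
  · rintro ⟨h1, h2⟩ x hx
    have e1 := h1 x.1 (congrArg Prod.fst hx)
    have e2 := h2 x.2 (congrArg Prod.snd hx)
    ext <;> assumption

lemma aux_isUnit_prod {R S : Type*} [CommRing R] [CommRing S] {a : R} {b : S}
    (ha : IsUnit a) (hb : IsUnit b) : IsUnit (a, b) := by
  obtain ⟨u, rfl⟩ := ha
  obtain ⟨v, rfl⟩ := hb
  exact ⟨⟨((u : R), (v : S)), ((↑u⁻¹ : R), (↑v⁻¹ : S)),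
    by ext <;> simp, by ext <;> simp⟩, rfl⟩

/-- If `R` and `S` are normal domains (integrally closed in their fraction
fields), then the product ring `R × S` is integrally closed in its total
quotient ring. -/
theorem stmt10 (R S : Type*) [CommRing R] [IsDomain R] [IsIntegrallyClosed R]
    [CommRing S] [IsDomain S] [IsIntegrallyClosed S] :
    ∀ x : FractionRing (R × S), IsIntegral (R × S) x →
      ∃ y : R × S, algebraMap (R × S) (FractionRing (R × S)) y = x := by
  intro x hx
  set K := FractionRing R × FractionRing S
  letI : Algebra (R × S) K :=
    ((algebraMap R (FractionRing R)).prodMap (algebraMap S (FractionRing S))).toAlgebra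
  have halg : ∀ p : R × S, algebraMap (R × S) K p
      = (algebraMap R (FractionRing R) p.1, algebraMap S (FractionRing S) p.2) :=
    fun p => rfl
  letI : IsLocalization (R × S)⁰ K := by
    refine ⟨fun m => ?_, fun z => ?_, fun {p q} h => ?_⟩
    · obtain ⟨h1, h2⟩ := (aux_mem_nzd_prod m.1).mp m.2
      exact aux_isUnit_prod (IsLocalization.map_units (FractionRing R) ⟨_, h1⟩)
        (IsLocalization.map_units (FractionRing S) ⟨_, h2⟩)
    · obtain ⟨⟨a, r⟩, h1⟩ := IsLocalization.surj R⁰ z.1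
      obtain ⟨⟨b, s⟩, h2⟩ := IsLocalization.surj S⁰ z.2
      refine ⟨⟨(a, b), ⟨(r.1, s.1), (aux_mem_nzd_prod _).mpr ⟨r.2, s.2⟩⟩⟩, ?_⟩
      ext <;> simpa [halg]
    · have e1 := congrArg Prod.fst h
      have e2 := congrArg Prod.snd h
      simp only [halg] at e1 e2
      exact ⟨1, by ext <;> simp [IsFractionRing.injective R (FractionRing R) e1,
        IsFractionRing.injective S (FractionRing S) e2]⟩
  let e : FractionRing (R × S) ≃ₐ[R × S] K :=
    IsLocalization.algEquiv (R × S)⁰ (FractionRing (R × S)) K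
  have hex : IsIntegral (R × S) (e x) := hx.map e
  obtain ⟨p, hp, hp0⟩ := hex
  have h1 : IsIntegral R (e x).1 := by
    refine ⟨p.map (RingHom.fst R S), hp.map _, ?_⟩
    have h := congrArg (RingHom.fst (FractionRing R) (FractionRing S)) hp0
    rw [Polynomial.hom_eval₂] at h
    rw [Polynomial.eval₂_map]
    exact h
  have h2 : IsIntegral S (e x).2 := by
    refine ⟨p.map (RingHom.snd R S), hp.map _, ?_⟩
    have h := congrArg (RingHom.snd (FractionRing R) (FractionRing S)) hp0
    rw [Polynomial.hom_eval₂] at h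
    rw [Polynomial.eval₂_map]
    exact h
  obtain ⟨a, ha⟩ := IsIntegrallyClosed.isIntegral_iff.mp h1
  obtain ⟨b, hb⟩ := IsIntegrallyClosed.isIntegral_iff.mp h2
  refine ⟨(a, b), e.injective ?_⟩
  rw [AlgEquiv.commutes]
  ext <;> simp [halg, ha, hb]
end

section
/- Let p_1,...,p_k be a regular sequence in a commutative ring R generating the ideal I. Then the associated graded ring ⊕_{n≥0} I^n/I^{n+1} is isomorphic as a graded (R/I)-algebra to the polynomial ring (R/I)[t_1,...,t_k], via the map sending t_i to the class of p_i in I/I^2. -/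
open MvPolynomial
namespace Stmt12Aux
variable {R : Type*} [CommRing R] {k : ℕ}

/-- The ideal generated by the first `j` elements of the sequence. -/
def Ij (p : Fin k → R) (j : ℕ) : Ideal R := Ideal.span (p '' {i | (i : ℕ) < j})

/-- All monomials of `F` only involve variables of index `< j`. -/
def SuppLt (j : ℕ) (F : MvPolynomial (Fin k) R) : Prop :=
  ∀ m : Fin k →₀ ℕ, F.coeff m ≠ 0 → ∀ i : Fin k, m i ≠ 0 → (i : ℕ) < j

lemma Ij_mono (p : Fin k → R) {j j' : ℕ} (h : j ≤ j') : Ij p j ≤ Ij p j' :=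
  Ideal.span_mono (Set.image_mono fun _ hi => lt_of_lt_of_le hi h)

lemma SuppLt.mono {j j' : ℕ} (h : j ≤ j') {F : MvPolynomial (Fin k) R}
    (hF : SuppLt j F) : SuppLt j' F :=
  fun m hm i hi => lt_of_lt_of_le (hF m hm i hi) h

lemma SuppLt.add {j : ℕ} {F G : MvPolynomial (Fin k) R} (hF : SuppLt j F)
    (hG : SuppLt j G) : SuppLt j (F + G) := by
  intro m hm i hi
  rw [coeff_add] at hm
  rcases ne_or_eq (F.coeff m) 0 with h | h
  · exact hF m h i hi
  · exact hG m (by rw [h, zero_add] at hm; exact hm) i hi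

lemma SuppLt.mul {j : ℕ} {F G : MvPolynomial (Fin k) R} (hF : SuppLt j F)
    (hG : SuppLt j G) : SuppLt j (F * G) := by
  intro m hm i hi
  have hmem : m ∈ (F * G).support := mem_support_iff.mpr hm
  obtain ⟨m1, hm1, m2, hm2, rfl⟩ := Finset.mem_add.mp (support_mul F G hmem)
  have : m1 i ≠ 0 ∨ m2 i ≠ 0 := by
    by_contra hcon
    push_neg at hcon
    exact hi (by simp [Finsupp.add_apply, hcon.1, hcon.2])
  rcases this with h' | h'
  · exact hF m1 (mem_support_iff.mp hm1) i h'
  · exact hG m2 (mem_support_iff.mp hm2) i h'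

lemma SuppLt.sub {j : ℕ} {F G : MvPolynomial (Fin k) R} (hF : SuppLt j F)
    (hG : SuppLt j G) : SuppLt j (F - G) := by
  intro m hm i hi
  rw [coeff_sub] at hm
  rcases ne_or_eq (F.coeff m) 0 with h | h
  · exact hF m h i hi
  · exact hG m (by rw [h, zero_sub, neg_ne_zero] at hm; exact hm) i hi

lemma SuppLt.C_mul {j : ℕ} {F : MvPolynomial (Fin k) R} (c : R) (hF : SuppLt j F) :
    SuppLt j (C c * F) :=
  fun m hm i hi => hF m (fun h => hm (by rw [coeff_C_mul, h, mul_zero])) i hi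

lemma degree_of_coeff_ne {F : MvPolynomial (Fin k) R} {d : ℕ} (hF : F.IsHomogeneous d)
    {m : Fin k →₀ ℕ} (h : F.coeff m ≠ 0) : m.degree = d := by
  rw [Finsupp.degree_eq_weight_one]; exact hF h

lemma isHomogeneous_of_degree {F : MvPolynomial (Fin k) R} {d : ℕ}
    (h : ∀ m : Fin k →₀ ℕ, F.coeff m ≠ 0 → m.degree = d) : F.IsHomogeneous d := by
  intro m hm
  have := h m hm; rw [Finsupp.degree_eq_weight_one] at this; exact this

lemma degree_add (u m : Fin k →₀ ℕ) : (u + m).degree = u.degree + m.degree := by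
  simp only [Finsupp.degree_eq_weight_one]; exact map_add _ _ _

lemma degree_single (i : Fin k) : (Finsupp.single i 1).degree = 1 := by
  exact Finsupp.degree_single i 1

lemma prod_mem_pow {ι : Type*} (s : Finset ι) (f : ι → R) (g : ι → ℕ) (J : Ideal R)
    (h : ∀ i ∈ s, f i ∈ J ^ g i) : (∏ i ∈ s, f i) ∈ J ^ (∑ i ∈ s, g i) := by
  classical
  induction s using Finset.induction with
  | empty => simp [Ideal.one_eq_top]
  | insert _ _ hx ih =>
      rw [Finset.prod_insert hx, Finset.sum_insert hx, pow_add]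
      exact Ideal.mul_mem_mul (h _ (Finset.mem_insert_self _ _))
        (ih fun i hi => h i (Finset.mem_insert_of_mem hi))

lemma eval_mem_pow (p : Fin k → R) {j d : ℕ} {F : MvPolynomial (Fin k) R}
    (hF : F.IsHomogeneous d) (hs : SuppLt j F) : eval p F ∈ Ij p j ^ d := by
  rw [eval_eq]
  refine Ideal.sum_mem _ fun m hm => ?_
  rw [mem_support_iff] at hm
  refine Ideal.mul_mem_left _ _ ?_
  rw [← degree_of_coeff_ne hF hm]
  exact prod_mem_pow _ _ _ _ fun i hi => by
    refine Ideal.pow_mem_pow ?_ _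
    exact Ideal.subset_span ⟨i, hs m hm i (Finsupp.mem_support_iff.mp hi), rfl⟩

lemma eval_mem_pow_succ (p : Fin k → R) {j d : ℕ} {F : MvPolynomial (Fin k) R}
    (hF : F.IsHomogeneous d) (hs : SuppLt j F) (hc : ∀ m, F.coeff m ∈ Ij p j) :
    eval p F ∈ Ij p j ^ (d + 1) := by
  rw [eval_eq]
  refine Ideal.sum_mem _ fun m hm => ?_
  rw [mem_support_iff] at hm
  rw [pow_succ']
  refine Ideal.mul_mem_mul (hc m) ?_
  rw [← degree_of_coeff_ne hF hm]
  exact prod_mem_pow _ _ _ _ fun i hi => by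
    refine Ideal.pow_mem_pow ?_ _
    exact Ideal.subset_span ⟨i, hs m hm i (Finsupp.mem_support_iff.mp hi), rfl⟩

/-- Surjectivity: every element of `(Ij p j)^d` is the value of a homogeneous
polynomial of degree `d` in the first `j` variables. -/
lemma exists_rep (p : Fin k → R) (j : ℕ) : ∀ (d : ℕ), ∀ x ∈ Ij p j ^ d,
    ∃ F : MvPolynomial (Fin k) R, F.IsHomogeneous d ∧ SuppLt j F ∧ eval p F = x := by
  have h1 : ∀ a ∈ Ij p j, ∃ G : MvPolynomial (Fin k) R,
      G.IsHomogeneous 1 ∧ SuppLt j G ∧ eval p G = a := by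
    intro a ha
    refine Submodule.span_induction ?_ ?_ ?_ ?_ ha
    · rintro x ⟨i, hi, rfl⟩
      exact ⟨X i, isHomogeneous_X _ _, fun m hm i' hi' => by
        rw [coeff_X'] at hm
        split_ifs at hm with h
        · subst h
          rw [Finsupp.single_apply_ne_zero] at hi'
          exact hi'.1 ▸ hi
        · exact absurd rfl hm, by simp⟩
    · exact ⟨0, isHomogeneous_zero _ _ _, fun m hm => by simp at hm, by simp⟩
    · rintro x y - - ⟨F, hF, hFs, hFe⟩ ⟨G, hG, hGs, hGe⟩
      exact ⟨F + G, hF.add hG, hFs.add hGs, by simp [hFe, hGe]⟩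
    · rintro c x - ⟨F, hF, hFs, hFe⟩
      exact ⟨C c * F, by simpa using (isHomogeneous_C _ c).mul hF, hFs.C_mul c,
        by simp [hFe]⟩
  intro d
  induction d with
  | zero =>
      intro x hx
      exact ⟨C x, isHomogeneous_C _ _, fun m hm i hi => by
        rw [coeff_C] at hm
        split_ifs at hm with h
        · exact absurd (h ▸ hi) (by simp)
        · exact absurd rfl hm, by simp⟩
  | succ d ih =>
      intro x hx
      rw [pow_succ] at hx
      refine Submodule.mul_induction_on hx ?_ ?_
      · intro b hb a ha
        obtain ⟨F, hF, hFs, hFe⟩ := ih b hb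
        obtain ⟨G, hG, hGs, hGe⟩ := h1 a ha
        exact ⟨F * G, hF.mul hG, hFs.mul hGs, by simp [hFe, hGe]⟩
      · rintro x y ⟨F, hF, hFs, hFe⟩ ⟨G, hG, hGs, hGe⟩
        exact ⟨F + G, hF.add hG, hFs.add hGs, by simp [hFe, hGe]⟩

/-- Refined surjectivity: elements of `(Ij p j)^(d+1)` are values of homogeneous
polynomials of degree `d` whose coefficients all lie in `Ij p j`. -/
lemma exists_rep' (p : Fin k → R) (j d : ℕ) : ∀ x ∈ Ij p j ^ (d + 1),
    ∃ F : MvPolynomial (Fin k) R, F.IsHomogeneous d ∧ SuppLt j F ∧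
      (∀ m, F.coeff m ∈ Ij p j) ∧ eval p F = x := by
  intro x hx
  rw [pow_succ] at hx
  refine Submodule.mul_induction_on hx ?_ ?_
  · intro b hb a ha
    obtain ⟨F, hF, hFs, hFe⟩ := exists_rep p j d b hb
    refine ⟨C a * F, by simpa using (isHomogeneous_C _ a).mul hF, hFs.C_mul a,
      fun m => ?_, by simp [hFe]; ring⟩
    rw [coeff_C_mul]
    exact Ideal.mul_mem_right _ _ ha
  · rintro x y ⟨F, hF, hFs, hFc, hFe⟩ ⟨G, hG, hGs, hGc, hGe⟩
    exact ⟨F + G, hF.add hG, hFs.add hGs,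
      fun m => by rw [coeff_add]; exact Ideal.add_mem _ (hFc m) (hGc m),
      by simp [hFe, hGe]⟩

/-- `KEYd p j d`: degree-`d` homogeneous polynomials in the first `j` variables
that evaluate to `0` have all coefficients in `Ij p j`. -/
def KEYd (p : Fin k → R) (j d : ℕ) : Prop :=
  ∀ F : MvPolynomial (Fin k) R, F.IsHomogeneous d → SuppLt j F → eval p F = 0 →
    ∀ m, F.coeff m ∈ Ij p j

/-- Quasi-regularity in degree `d` follows from the kernel statement in degree `d`. -/
lemma QRd (p : Fin k → R) {j d : ℕ} (hK : KEYd p j d) (F : MvPolynomial (Fin k) R)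
    (hF : F.IsHomogeneous d) (hs : SuppLt j F)
    (h : eval p F ∈ Ij p j ^ (d + 1)) : ∀ m, F.coeff m ∈ Ij p j := by
  obtain ⟨G, hG, hGs, hGc, hGe⟩ := exists_rep' p j d _ h
  intro m
  have hsub : (F - G).coeff m ∈ Ij p j := by
    exact hK (F - G) (hF.sub hG) (hs.sub hGs) (by rw [map_sub, hGe, sub_self]) m
  have : F.coeff m = (F - G).coeff m + G.coeff m := by rw [coeff_sub]; ring
  rw [this]
  exact Ideal.add_mem _ hsub (hGc m)


lemma coeff_eq_zero_of_constant {p : Fin k → R} {F : MvPolynomial (Fin k) R}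
    (h0 : ∀ m : Fin k →₀ ℕ, m ≠ 0 → F.coeff m = 0) (he : eval p F = 0) :
    ∀ m, F.coeff m = 0 := by
  have hF : F = C (F.coeff 0) := by
    ext m'
    rcases eq_or_ne m' 0 with rfl | hm'
    · simp
    · rw [h0 m' hm', coeff_C, if_neg fun h => hm' h.symm]
  have h00 : F.coeff 0 = 0 := by
    have := congrArg (eval p) hF
    rw [he, eval_C] at this
    exact this.symm
  intro m
  rcases eq_or_ne m 0 with rfl | hm
  · exact h00
  · exact h0 m hm

/-- If `p_{j}` is a nonzerodivisor mod `Ij p j` and the first `j` elements are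
quasi-regular, then `p_j` is a nonzerodivisor mod every power of `Ij p j`. -/
lemma nzd_pow (p : Fin k → R) {j : ℕ} (hjk : j < k)
    (hK : ∀ d, KEYd p j d)
    (hreg' : ∀ f : R, p ⟨j, hjk⟩ * f ∈ Ij p j → f ∈ Ij p j) :
    ∀ d z, p ⟨j, hjk⟩ * z ∈ Ij p j ^ d → z ∈ Ij p j ^ d := by
  intro d
  induction d with
  | zero => intro z _; simp [Ideal.one_eq_top]
  | succ d ih =>
      intro z hz
      have hz' : z ∈ Ij p j ^ d := ih z (Ideal.pow_le_pow_right (Nat.le_succ d) hz)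
      obtain ⟨W, hW, hWs, hWe⟩ := exists_rep p j d z hz'
      have hCW : eval p (C (p ⟨j, hjk⟩) * W) ∈ Ij p j ^ (d + 1) := by
        rw [map_mul, eval_C, hWe]; exact hz
      have hcoef : ∀ m, (C (p ⟨j, hjk⟩) * W).coeff m ∈ Ij p j :=
        QRd p (hK d) _ (by simpa using (isHomogeneous_C _ _).mul hW) (hWs.C_mul _) hCW
      have hWc : ∀ m, W.coeff m ∈ Ij p j := fun m => hreg' _ (by
        have := hcoef m; rwa [coeff_C_mul] at this)
      rw [← hWe]
      exact eval_mem_pow_succ p hW hWs hWc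

/-- The key statement: regular sequences are quasi-regular (kernel form). -/
lemma key (p : Fin k → R)
    (hreg : ∀ i : Fin k, ∀ f : R,
      p i * f ∈ Ideal.span (p '' {j | j < i}) → f ∈ Ideal.span (p '' {j | j < i})) :
    ∀ j d, KEYd p j d := by
  have hreg' : ∀ (j : ℕ) (hjk : j < k) (f : R),
      p ⟨j, hjk⟩ * f ∈ Ij p j → f ∈ Ij p j := by
    intro j hjk f hf
    have hset : (p '' {i | i < (⟨j, hjk⟩ : Fin k)}) = p '' {i : Fin k | (i : ℕ) < j} := by
      have : {i | i < (⟨j, hjk⟩ : Fin k)} = {i : Fin k | (i : ℕ) < j} := by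
        ext i; exact Fin.lt_def
      rw [this]
    have := hreg ⟨j, hjk⟩ f (by rw [hset]; exact hf)
    rwa [hset] at this
  intro j
  induction j with
  | zero =>
      intro d F hF hs he m
      have h0 : ∀ m' : Fin k →₀ ℕ, m' ≠ 0 → F.coeff m' = 0 := by
        intro m' hm'
        by_contra hc
        obtain ⟨i, hi⟩ : ∃ i, m' i ≠ 0 := by
          by_contra h; push_neg at h; exact hm' (Finsupp.ext h)
        exact absurd (hs m' hc i hi) (Nat.not_lt_zero _)
      rw [coeff_eq_zero_of_constant h0 he m]
      exact zero_mem _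
  | succ j ihj =>
      by_cases hjk : j < k
      · intro d
        induction d with
        | zero =>
            intro F hF hs he m
            have h0 : ∀ m' : Fin k →₀ ℕ, m' ≠ 0 → F.coeff m' = 0 := by
              intro m' hm'
              by_contra hc
              exact hm' ((Finsupp.degree_eq_zero_iff m').mp (degree_of_coeff_ne hF hc))
            rw [coeff_eq_zero_of_constant h0 he m]
            exact zero_mem _
        | succ d ihd =>
            intro F hF hs he m
            set s : Fin k := ⟨j, hjk⟩ with hs_def
            set q : R := p s with hq_def
            set u : Fin k →₀ ℕ := Finsupp.single s 1 with hu
            set Q := F.divMonomial u with hQdef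
            set P := F.modMonomial u with hPdef
            have hsplit : Q * monomial u 1 + P = F := by
              rw [mul_comm]; exact F.divMonomial_add_modMonomial u
            have hQcoeff : ∀ m', Q.coeff m' = F.coeff (u + m') := fun m' => rfl
            have hPcoeff1 : ∀ m', u ≤ m' → P.coeff m' = 0 :=
              fun m' h => coeff_modMonomial_of_le F h
            have hPcoeff2 : ∀ m', ¬u ≤ m' → P.coeff m' = F.coeff m' :=
              fun m' h => coeff_modMonomial_of_not_le F h
            have hQ : Q.IsHomogeneous d := by
              refine isHomogeneous_of_degree fun m' hm' => ?_
              rw [hQcoeff] at hm'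
              have hd := degree_of_coeff_ne hF hm'
              rw [degree_add, hu, degree_single] at hd
              omega
            have hQs : SuppLt (j + 1) Q := by
              intro m' hm' i hi
              rw [hQcoeff] at hm'
              refine hs _ hm' i ?_
              have : (u + m') i = u i + m' i := Finsupp.add_apply u m' i
              omega
            have hP : P.IsHomogeneous (d + 1) := by
              refine isHomogeneous_of_degree fun m' hm' => ?_
              by_cases hle : u ≤ m'
              · exact absurd (hPcoeff1 m' hle) hm'
              · rw [hPcoeff2 m' hle] at hm'
                exact degree_of_coeff_ne hF hm'
            have hPs : SuppLt j P := by
              intro m' hm' i hi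
              by_cases hle : u ≤ m'
              · exact absurd (hPcoeff1 m' hle) hm'
              · rw [hPcoeff2 m' hle] at hm'
                have hlt : (i : ℕ) < j + 1 := hs m' hm' i hi
                rcases Nat.lt_succ_iff_lt_or_eq.mp hlt with h | h
                · exact h
                · exfalso
                  apply hle
                  have hi_s : i = s := Fin.ext h
                  rw [hu, Finsupp.single_le_iff, ← hi_s]
                  omega
            have heval : q * eval p Q + eval p P = 0 := by
              have h1 : eval p (Q * monomial u 1 + P) = 0 := by rw [hsplit]; exact he
              rw [map_add, map_mul, eval_monomial, one_mul, hu,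
                Finsupp.prod_single_index (by simp), pow_one] at h1
              linear_combination h1
            have hPJ : eval p P ∈ Ij p j ^ (d + 1) := eval_mem_pow p hP hPs
            have hqQ : q * eval p Q ∈ Ij p j ^ (d + 1) := by
              have h2 : q * eval p Q = -eval p P := by linear_combination heval
              rw [h2]; exact neg_mem hPJ
            have hQJ : eval p Q ∈ Ij p j ^ (d + 1) :=
              nzd_pow p hjk ihj (hreg' j hjk) (d + 1) _ hqQ
            have hQc : ∀ m', Q.coeff m' ∈ Ij p (j + 1) :=
              QRd p ihd Q hQ hQs
                (Ideal.pow_right_mono (Ij_mono p (Nat.le_succ j)) _ hQJ)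
            obtain ⟨H, hH, hHs, hHe⟩ := exists_rep p j (d + 1) _ hQJ
            have hT : (C q * H + P).IsHomogeneous (d + 1) :=
              (by simpa using (isHomogeneous_C _ q).mul hH : (C q * H).IsHomogeneous (d+1)).add hP
            have hTs : SuppLt j (C q * H + P) := (hHs.C_mul q).add hPs
            have hTe : eval p (C q * H + P) = 0 := by
              rw [map_add, map_mul, eval_C, hHe]
              linear_combination heval
            have hTc := ihj (d + 1) _ hT hTs hTe
            have hq_mem : q ∈ Ij p (j + 1) :=
              Ideal.subset_span ⟨s, Nat.lt_succ_self j, rfl⟩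
            have hPc : ∀ m', P.coeff m' ∈ Ij p (j + 1) := by
              intro m'
              have h3 : P.coeff m' = (C q * H + P).coeff m' - q * H.coeff m' := by
                rw [coeff_add, coeff_C_mul]; ring
              rw [h3]
              exact Ideal.sub_mem _ (Ij_mono p (Nat.le_succ j) (hTc m'))
                (Ideal.mul_mem_right _ _ hq_mem)
            have h4 : F.coeff m = (Q * monomial u 1).coeff m + P.coeff m := by
              rw [← hsplit, coeff_add]
            rw [h4]
            refine Ideal.add_mem _ ?_ (hPc m)
            rw [coeff_mul_monomial']
            split_ifs with h
            · rw [mul_one]; exact hQc _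
            · exact zero_mem _
      · intro d F hF hs he m
        have hk_le : k ≤ j := Nat.not_lt.mp hjk
        have hIj : Ij p (j + 1) = Ij p j := by
          unfold Ij
          congr 1
          ext i
          constructor
          · rintro ⟨i', -, rfl⟩
            exact ⟨i', lt_of_lt_of_le i'.isLt hk_le, rfl⟩
          · rintro ⟨i', -, rfl⟩
            exact ⟨i', lt_of_lt_of_le i'.isLt (Nat.le_succ_of_le hk_le), rfl⟩
        rw [hIj]
        exact ihj d F hF
          (fun m' hm' i _ => lt_of_lt_of_le i.isLt hk_le) he m

end Stmt12Aux

open Stmt12Aux in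
/-- Degreewise form of the isomorphism `(R/I)[t_1,…,t_k] ≅ ⊕ₙ Iⁿ/Iⁿ⁺¹` for a
regular sequence `p_1,…,p_k` generating `I`, given by `t_i ↦ p_i + I²`:
the evaluation map `F ↦ F(p_1,…,p_k)` sends degree-`d` homogeneous polynomials
onto `I^d`, and it lands in `I^{d+1}` exactly when all coefficients of `F`
lie in `I` (so the induced map on `I^d/I^{d+1}` is an isomorphism from the
degree-`d` part of `(R/I)[t_1,…,t_k]`). -/
theorem stmt12 (R : Type*) [CommRing R] [IsNoetherianRing R] (k : ℕ) (p : Fin k → R)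
    (htop : Ideal.span (Set.range p) ≠ ⊤)
    (hreg : ∀ i : Fin k, ∀ f : R,
      p i * f ∈ Ideal.span (p '' {j | j < i}) → f ∈ Ideal.span (p '' {j | j < i})) :
    (∀ (d : ℕ) (x : R), x ∈ Ideal.span (Set.range p) ^ d →
      ∃ F : MvPolynomial (Fin k) R, F.IsHomogeneous d ∧ MvPolynomial.eval p F = x) ∧
    (∀ (d : ℕ) (F : MvPolynomial (Fin k) R), F.IsHomogeneous d →
      (MvPolynomial.eval p F ∈ Ideal.span (Set.range p) ^ (d + 1) ↔
        ∀ m : Fin k →₀ ℕ, F.coeff m ∈ Ideal.span (Set.range p))) := by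
  have hIk : Ideal.span (Set.range p) = Ij p k := by
    unfold Ij
    have : Set.range p = p '' {i : Fin k | (i : ℕ) < k} := by
      ext x
      simp only [Set.mem_range, Set.mem_image, Set.mem_setOf_eq]
      exact ⟨fun ⟨i, h⟩ => ⟨i, i.isLt, h⟩, fun ⟨i, _, h⟩ => ⟨i, h⟩⟩
    rw [this]
  have hSupp : ∀ F : MvPolynomial (Fin k) R, SuppLt k F :=
    fun F m hm i hi => i.isLt
  constructor
  · intro d x hx
    rw [hIk] at hx
    obtain ⟨F, hF, -, hFe⟩ := exists_rep p k d x hx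
    exact ⟨F, hF, hFe⟩
  · intro d F hF
    constructor
    · intro h
      rw [hIk] at h ⊢
      intro m
      exact QRd p (key p hreg k d) F hF (hSupp F) h m
    · intro h
      rw [hIk] at h ⊢
      exact eval_mem_pow_succ p hF (hSupp F) h
end
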